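/- arXiv:1801.10243 — 2 statements merged into one kernel-verified Lean document; each statement's English description precedes it below -/
import Mathlib

section
/- Suppose Xᵀ(D+Γ)X and XᵀDX are positive definite, with Γ = diag(γ). Let ω̄_max be the largest singular value of XXᵀ, ν_min the smallest singular value of Xᵀ(D+Γ)X, and A = XᵀDX. Then for every vector z, |zᵀ(Xᵀ(D+Γ)X)⁻¹z - zᵀ(XᵀDX)⁻¹z| ≤ (‖γ‖₂ + (ω̄_max/ν_min)·‖γ‖₄²) · ‖XA⁻¹z‖₄². -/
open Matrix Finset

lemma quad_helper {n q : Type*} [Fintype n] [Fintype q] (M : Matrix n q ℝ)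
    (N : Matrix n n ℝ) (z : q → ℝ) :
    z ⬝ᵥ (Mᵀ * N * M).mulVec z = (M.mulVec z) ⬝ᵥ N.mulVec (M.mulVec z) := by
  rw [← Matrix.mulVec_mulVec, ← Matrix.mulVec_mulVec, Matrix.dotProduct_mulVec,
    Matrix.vecMul_transpose]

lemma norm_sq_helper {n q : Type*} [Fintype n] [Fintype q] (M : Matrix n q ℝ) (v : n → ℝ) :
    (Mᵀ.mulVec v) ⬝ᵥ (Mᵀ.mulVec v) = v ⬝ᵥ (M * Mᵀ).mulVec v := by
  rw [Matrix.dotProduct_mulVec, Matrix.vecMul_transpose, Matrix.mulVec_mulVec,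
    dotProduct_comm]


set_option maxHeartbeats 1000000 in
/-- Quadratic-form perturbation bound (Lemma 9 of the paper).  If `Xᵀ(D+Γ)X` and `XᵀDX`
are positive definite with `Γ = diag(γ)`, `ω̄max` an upper bound for the largest singular
value of `XXᵀ` and `νmin` a lower bound for the smallest singular value of `Xᵀ(D+Γ)X`,
then for every `z`,
`|zᵀ(Xᵀ(D+Γ)X)⁻¹z - zᵀ(XᵀDX)⁻¹z| ≤ (‖γ‖₂ + (ω̄max/νmin)‖γ‖₄²)·‖XA⁻¹z‖₄²`. -/
theorem quadratic_form_inverse_perturbation (m p : ℕ)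
    (X : Matrix (Fin m) (Fin p) ℝ) (d γ : Fin m → ℝ)
    (D : Matrix (Fin m) (Fin m) ℝ) (hD : D = Matrix.diagonal d)
    (Γ : Matrix (Fin m) (Fin m) ℝ) (hΓ : Γ = Matrix.diagonal γ)
    (hPD1 : (Xᵀ * (D + Γ) * X).PosDef) (hPD2 : (Xᵀ * D * X).PosDef)
    (ωmax νmin : ℝ) (hν : 0 < νmin)
    (hω : ∀ v : Fin m → ℝ, v ⬝ᵥ (X * Xᵀ).mulVec v ≤ ωmax * (v ⬝ᵥ v))
    (hνmin : ∀ v : Fin p → ℝ, νmin * Real.sqrt (v ⬝ᵥ v)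
      ≤ Real.sqrt ((Xᵀ * (D + Γ) * X).mulVec v ⬝ᵥ (Xᵀ * (D + Γ) * X).mulVec v))
    (A : Matrix (Fin p) (Fin p) ℝ) (hA : A = Xᵀ * D * X) (z : Fin p → ℝ) :
    |z ⬝ᵥ (Xᵀ * (D + Γ) * X)⁻¹.mulVec z - z ⬝ᵥ (Xᵀ * D * X)⁻¹.mulVec z| ≤
      (Real.sqrt (∑ i, γ i ^ 2) + (ωmax / νmin) * Real.sqrt (∑ i, γ i ^ 4)) *
        Real.sqrt (∑ j, ((X * A⁻¹).mulVec z j) ^ 4) := by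
  subst hA
  -- degenerate case m = 0
  rcases Nat.eq_zero_or_pos m with hm | hm
  · subst hm
    have hBA : Xᵀ * (D + Γ) * X = Xᵀ * D * X := by
      ext i j; simp [Matrix.mul_apply]
    rw [hBA]
    simp
  -- ωmax is nonnegative
  have hω0 : 0 ≤ ωmax := by
    have h1 := hω (Pi.single ⟨0, hm⟩ 1)
    have h2 : (0:ℝ) ≤ (Pi.single ⟨0, hm⟩ 1 : Fin m → ℝ) ⬝ᵥ (X * Xᵀ).mulVec (Pi.single ⟨0, hm⟩ 1) := by
      rw [← norm_sq_helper]
      exact Finset.sum_nonneg fun i _ => mul_self_nonneg _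
    have h3 : (Pi.single ⟨0, hm⟩ 1 : Fin m → ℝ) ⬝ᵥ (Pi.single ⟨0, hm⟩ 1) = 1 := by
      simp [dotProduct, Pi.single_apply]
    nlinarith
  set B := Xᵀ * (D + Γ) * X with hBdef
  set A0 := Xᵀ * D * X with hA0def
  set E := Xᵀ * Γ * X with hEdef
  have hBsym : Bᵀ = B := by
    rw [hBdef, hD, hΓ]
    simp [Matrix.transpose_mul, Matrix.transpose_add, Matrix.mul_assoc]
  have hAsym : A0ᵀ = A0 := by
    rw [hA0def, hD]; simp [Matrix.transpose_mul, Matrix.mul_assoc]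
  have hEsym : Eᵀ = E := by
    rw [hEdef, hΓ]; simp [Matrix.transpose_mul, Matrix.mul_assoc]
  have hE : E = B - A0 := by
    rw [hEdef, hBdef, hA0def, Matrix.mul_add, Matrix.add_mul]; abel
  haveI : Invertible B := hPD1.isUnit.invertible
  haveI : Invertible A0 := hPD2.isUnit.invertible
  have hAinv_sym : (A0⁻¹)ᵀ = A0⁻¹ := by rw [Matrix.transpose_nonsing_inv, hAsym]
  -- key resolvent identity
  have h1 : A0⁻¹ * E * B⁻¹ = A0⁻¹ - B⁻¹ := by
    simp [hE, Matrix.mul_sub, Matrix.sub_mul, Matrix.mul_assoc,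
      Matrix.mul_inv_cancel_left_of_invertible, Matrix.inv_mul_cancel_left_of_invertible,
      Matrix.mul_inv_of_invertible, Matrix.inv_mul_of_invertible]
  have h2 : B⁻¹ * E * A0⁻¹ = A0⁻¹ - B⁻¹ := by
    simp [hE, Matrix.mul_sub, Matrix.sub_mul, Matrix.mul_assoc,
      Matrix.mul_inv_cancel_left_of_invertible, Matrix.inv_mul_cancel_left_of_invertible,
      Matrix.mul_inv_of_invertible, Matrix.inv_mul_of_invertible]
  have key : B⁻¹ - A0⁻¹ = -(A0⁻¹ * E * A0⁻¹) + A0⁻¹ * E * B⁻¹ * E * A0⁻¹ := by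
    have : A0⁻¹ * E * B⁻¹ * E * A0⁻¹ = (A0⁻¹ - B⁻¹) * E * A0⁻¹ := by rw [h1]
    rw [this, Matrix.sub_mul, Matrix.sub_mul, Matrix.mul_assoc B⁻¹ E A0⁻¹, ← Matrix.mul_assoc B⁻¹ E A0⁻¹, h2]
    noncomm_ring
  -- the two quadratic pieces
  set u : Fin m → ℝ := (X * A0⁻¹).mulVec z with hu
  set w : Fin p → ℝ := (E * A0⁻¹).mulVec z with hw
  have hT1 : z ⬝ᵥ (A0⁻¹ * E * A0⁻¹).mulVec z = u ⬝ᵥ Γ.mulVec u := by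
    have : A0⁻¹ * E * A0⁻¹ = (X * A0⁻¹)ᵀ * Γ * (X * A0⁻¹) := by
      rw [Matrix.transpose_mul, hAinv_sym, hEdef]
      simp only [Matrix.mul_assoc]
    rw [this, quad_helper, hu]
  have hT2 : z ⬝ᵥ (A0⁻¹ * E * B⁻¹ * E * A0⁻¹).mulVec z = w ⬝ᵥ B⁻¹.mulVec w := by
    have : A0⁻¹ * E * B⁻¹ * E * A0⁻¹ = (E * A0⁻¹)ᵀ * B⁻¹ * (E * A0⁻¹) := by
      rw [Matrix.transpose_mul, hAinv_sym, hEsym]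
      simp only [Matrix.mul_assoc]
    rw [this, quad_helper, hw]
  -- split the LHS
  have hsplit : z ⬝ᵥ B⁻¹.mulVec z - z ⬝ᵥ A0⁻¹.mulVec z
      = -(u ⬝ᵥ Γ.mulVec u) + w ⬝ᵥ B⁻¹.mulVec w := by
    rw [← hT1, ← hT2, ← dotProduct_sub, ← Matrix.sub_mulVec, key,
      Matrix.add_mulVec, dotProduct_add, Matrix.neg_mulVec, dotProduct_neg]
  -- abbreviations
  have dps : ∀ {n : Type} [Fintype n] (v : n → ℝ), v ⬝ᵥ v = ∑ i, v i ^ 2 := by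
    intro n _ v; simp [dotProduct, sq]
  set S4u := Real.sqrt (∑ j, u j ^ 4) with hS4u
  have hS4u0 : 0 ≤ S4u := Real.sqrt_nonneg _
  have hS4γ0 : 0 ≤ Real.sqrt (∑ i, γ i ^ 4) := Real.sqrt_nonneg _
  -- bound on the first term
  have b1 : |u ⬝ᵥ Γ.mulVec u| ≤ Real.sqrt (∑ i, γ i ^ 2) * S4u := by
    have he : u ⬝ᵥ Γ.mulVec u = ∑ i, u i * (γ i * u i) := by
      simp [hΓ, dotProduct, Matrix.mulVec_diagonal]
    rw [he]
    calc |∑ i, u i * (γ i * u i)| ≤ ∑ i, |u i * (γ i * u i)| :=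
          Finset.abs_sum_le_sum_abs _ _
      _ = ∑ i, |γ i| * (u i ^ 2) := by
          refine Finset.sum_congr rfl fun i _ => ?_
          rw [abs_mul, abs_mul, ← sq_abs (u i)]; ring
      _ ≤ Real.sqrt (∑ i, |γ i| ^ 2) * Real.sqrt (∑ i, (u i ^ 2) ^ 2) :=
          Real.sum_mul_le_sqrt_mul_sqrt _ _ _
      _ = Real.sqrt (∑ i, γ i ^ 2) * S4u := by
          rw [hS4u]; congr 2
          · exact Finset.sum_congr rfl fun i _ => by rw [sq_abs]
          · exact Finset.sum_congr rfl fun i _ => by ring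
  -- rewrite w
  have hwX : w = Xᵀ.mulVec (Γ.mulVec u) := by
    rw [hw, hu, hEdef]
    simp only [Matrix.mul_assoc, ← Matrix.mulVec_mulVec]
  -- second term is nonnegative
  have hBinv : (B⁻¹).PosDef := hPD1.inv
  have t2nn : 0 ≤ w ⬝ᵥ B⁻¹.mulVec w := by
    have := hBinv.posSemidef.dotProduct_mulVec_nonneg w
    simpa using this
  -- bound the second term by (∑ w²)/νmin
  set y := B⁻¹.mulVec w with hy
  have hwBy : B.mulVec y = w := by
    rw [hy, Matrix.mulVec_mulVec, Matrix.mul_inv_of_invertible, Matrix.one_mulVec]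
  have hyb : Real.sqrt (∑ i, y i ^ 2) ≤ Real.sqrt (∑ i, w i ^ 2) / νmin := by
    rw [le_div_iff₀ hν, mul_comm]
    have := hνmin y
    rw [hwBy, dps, dps] at this
    exact this
  have t2b : w ⬝ᵥ B⁻¹.mulVec w ≤ (∑ i, w i ^ 2) / νmin := by
    have h0 : w ⬝ᵥ B⁻¹.mulVec w = ∑ i, w i * y i := by
      rw [← hy]; simp [dotProduct]
    calc w ⬝ᵥ B⁻¹.mulVec w = ∑ i, w i * y i := h0
      _ ≤ Real.sqrt (∑ i, w i ^ 2) * Real.sqrt (∑ i, y i ^ 2) :=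
          Real.sum_mul_le_sqrt_mul_sqrt _ _ _
      _ ≤ Real.sqrt (∑ i, w i ^ 2) * (Real.sqrt (∑ i, w i ^ 2) / νmin) :=
          mul_le_mul_of_nonneg_left hyb (Real.sqrt_nonneg _)
      _ = (∑ i, w i ^ 2) / νmin := by
          rw [← mul_div_assoc, Real.mul_self_sqrt]
          exact Finset.sum_nonneg fun i _ => sq_nonneg _
  -- bound ∑ w²
  have wb : ∑ i, w i ^ 2 ≤ ωmax * ∑ i, (γ i * u i) ^ 2 := by
    have h1 : ∑ i, w i ^ 2 = (Γ.mulVec u) ⬝ᵥ (X * Xᵀ).mulVec (Γ.mulVec u) := by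
      rw [← dps, hwX, norm_sq_helper]
    have h2 : (Γ.mulVec u) ⬝ᵥ (Γ.mulVec u) = ∑ i, (γ i * u i) ^ 2 := by
      rw [dps]
      exact Finset.sum_congr rfl fun i _ => by rw [hΓ, Matrix.mulVec_diagonal]
    rw [h1, ← h2]
    exact hω _
  have gb : ∑ i, (γ i * u i) ^ 2 ≤ Real.sqrt (∑ i, γ i ^ 4) * S4u := by
    calc ∑ i, (γ i * u i) ^ 2 = ∑ i, (γ i ^ 2) * (u i ^ 2) := by
          exact Finset.sum_congr rfl fun i _ => by ring
      _ ≤ Real.sqrt (∑ i, (γ i ^ 2) ^ 2) * Real.sqrt (∑ i, (u i ^ 2) ^ 2) :=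
          Real.sum_mul_le_sqrt_mul_sqrt _ _ _
      _ = Real.sqrt (∑ i, γ i ^ 4) * S4u := by
          rw [hS4u]; congr 2
          · exact Finset.sum_congr rfl fun i _ => by ring
          · exact Finset.sum_congr rfl fun i _ => by ring
  -- assemble
  rw [hsplit]
  calc |-(u ⬝ᵥ Γ.mulVec u) + w ⬝ᵥ B⁻¹.mulVec w|
      ≤ |-(u ⬝ᵥ Γ.mulVec u)| + |w ⬝ᵥ B⁻¹.mulVec w| := abs_add_le _ _
    _ = |u ⬝ᵥ Γ.mulVec u| + w ⬝ᵥ B⁻¹.mulVec w := by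
        rw [abs_neg, abs_of_nonneg t2nn]
    _ ≤ Real.sqrt (∑ i, γ i ^ 2) * S4u + (∑ i, w i ^ 2) / νmin := add_le_add b1 t2b
    _ ≤ Real.sqrt (∑ i, γ i ^ 2) * S4u
        + (ωmax * (Real.sqrt (∑ i, γ i ^ 4) * S4u)) / νmin :=
        add_le_add_right ((div_le_div_iff_of_pos_right hν).mpr
          (wb.trans (mul_le_mul_of_nonneg_left gb hω0))) _
    _ = (Real.sqrt (∑ i, γ i ^ 2) + ωmax / νmin * Real.sqrt (∑ i, γ i ^ 4)) * S4u := by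
        ring
end

section
/- Let ℓ(y|z) be twice differentiable convex in z, r twice differentiable with Hessian of λr bounded below by 2λγ > 0 (e.g. r(β) = γ‖β‖² plus a convex smooth term). Let β̂ minimize Σⱼ ℓ(yⱼ|xⱼᵀβ) + λr(β) and β̂_{/i} minimize the same objective with the i-th term omitted. If the smallest eigenvalue of XᵀX + λ·diag(r''(β)) is at least 2λγ for all β (where ℓ is the squared loss ℓ(y|z) = (y-z)²/2), then ‖β̂_{/i} - β̂‖₂ ≤ |y_i - x_iᵀβ̂_{/i}|·‖x_i‖₂/(2λγ). -/
open Matrix Finset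

lemma mulVec_update_aux {n p : ℕ} (X : Matrix (Fin n) (Fin p) ℝ)
    (β : Fin p → ℝ) (k : Fin p) (t : ℝ) (j : Fin n) :
    X.mulVec (Function.update β k t) j = X.mulVec β j + X j k * (t - β k) := by
  classical
  simp only [Matrix.mulVec, dotProduct]
  rw [← Finset.sum_erase_add _ _ (Finset.mem_univ k),
      ← Finset.sum_erase_add _ (fun m => X j m * β m) (Finset.mem_univ k)]
  have h1 : ∑ m ∈ univ.erase k, X j m * Function.update β k t m
      = ∑ m ∈ univ.erase k, X j m * β m := by
    refine Finset.sum_congr rfl fun m hm => ?_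
    rw [Function.update_of_ne (Finset.ne_of_mem_erase hm)]
  rw [h1, Function.update_self]; ring

lemma stationary {n p : ℕ} (X : Matrix (Fin n) (Fin p) ℝ) (y : Fin n → ℝ)
    (r r' : ℝ → ℝ) (hr' : ∀ z, HasDerivAt r (r' z) z) (lam : ℝ)
    (s : Finset (Fin n)) (β : Fin p → ℝ)
    (hmin : ∀ β' : Fin p → ℝ,
      (∑ j ∈ s, (y j - X.mulVec β j) ^ 2 / 2) + lam * ∑ k, r (β k) ≤
        (∑ j ∈ s, (y j - X.mulVec β' j) ^ 2 / 2) + lam * ∑ k, r (β' k))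
    (k : Fin p) :
    ∑ j ∈ s, (X.mulVec β j - y j) * X j k + lam * r' (β k) = 0 := by
  classical
  set G : ℝ → ℝ := fun t =>
    (∑ j ∈ s, (y j - (X.mulVec β j + X j k * (t - β k))) ^ 2 / 2)
      + lam * (r t + ∑ m ∈ univ.erase k, r (β m)) with hGdef
  have hGeq : ∀ t, G t = (∑ j ∈ s, (y j - X.mulVec (Function.update β k t) j) ^ 2 / 2)
      + lam * ∑ m, r (Function.update β k t m) := by
    intro t
    have h2 : ∑ m, r (Function.update β k t m)
        = r t + ∑ m ∈ univ.erase k, r (β m) := by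
      rw [← Finset.sum_erase_add _ _ (Finset.mem_univ k), Function.update_self, add_comm]
      congr 1
      refine Finset.sum_congr rfl fun m hm => ?_
      rw [Function.update_of_ne (Finset.ne_of_mem_erase hm)]
    simp only [hGdef]
    rw [h2]
    congr 1
    refine Finset.sum_congr rfl fun j _ => ?_
    rw [mulVec_update_aux]
  have hglob : ∀ t, G (β k) ≤ G t := by
    intro t
    rw [hGeq, hGeq, Function.update_eq_self]
    exact hmin (Function.update β k t)
  have hloc : IsLocalMin G (β k) := Filter.Eventually.of_forall hglob
  have hd : HasDerivAt G
      (∑ j ∈ s, 2 * (y j - ((X.mulVec β) j + X j k * (β k - β k))) ^ 1 *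
          (-(X j k)) / 2 + lam * (r' (β k))) (β k) := by
    apply HasDerivAt.add
    · apply HasDerivAt.fun_sum
      intro j _
      apply HasDerivAt.div_const
      apply HasDerivAt.pow
      have heq : (fun t : ℝ => y j - ((X.mulVec β) j + X j k * (t - β k)))
          = fun t => -(X j k) * t + (y j - (X.mulVec β) j + X j k * β k) := by
        funext t; ring
      rw [heq]
      simpa using ((hasDerivAt_id (β k)).const_mul (-(X j k))).add_const
        (y j - (X.mulVec β) j + X j k * β k)
    · exact ((hr' (β k)).add_const _).const_mul lam
  have hzero := hloc.hasDerivAt_eq_zero hd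
  rw [← hzero]
  congr 1
  refine Finset.sum_congr rfl fun j _ => ?_
  ring

lemma strong_mono {r' r'' : ℝ → ℝ} (hr'' : ∀ z, HasDerivAt r' (r'' z) z)
    (γ : ℝ) (hconv : ∀ z, 2 * γ ≤ r'' z) (a b : ℝ) :
    2 * γ * (a - b) ^ 2 ≤ (r' a - r' b) * (a - b) := by
  set g : ℝ → ℝ := fun z => r' z - 2 * γ * z with hg
  have hmono : Monotone g := by
    have hdiff : Differentiable ℝ g := fun z =>
      ((hr'' z).sub ((hasDerivAt_id z).const_mul (2*γ))).differentiableAt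
    apply monotone_of_deriv_nonneg hdiff
    intro z
    have hgz : HasDerivAt g (r'' z - 2 * γ) z :=
      (hr'' z).sub (by simpa using (hasDerivAt_id z).const_mul (2*γ))
    rw [hgz.deriv]
    linarith [hconv z]
  rcases le_total b a with h | h
  · have h2 : g b ≤ g a := hmono h
    simp only [hg] at h2
    nlinarith
  · have h2 : g a ≤ g b := hmono h
    simp only [hg] at h2
    nlinarith


/-- Leave-one-out perturbation bound for ridge-type (strongly convex) regularized least
squares: if `β̂` minimizes `Σⱼ (yⱼ - xⱼᵀβ)²/2 + λ Σₖ r(βₖ)` and `β̂_{/i}` minimizes the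
objective with the `i`-th term omitted, where `r` is twice differentiable with
`r'' ≥ 2γ > 0` and the smallest eigenvalue of `XᵀX + λ diag(r''(β))` is at least `2λγ`
for every `β`, then `‖β̂_{/i} - β̂‖₂ ≤ |y_i - x_iᵀβ̂_{/i}| ‖x_i‖₂ / (2λγ)`. -/
theorem leave_one_out_perturbation_bound (n p : ℕ) (i : Fin n)
    (X : Matrix (Fin n) (Fin p) ℝ) (y : Fin n → ℝ)
    (r r' r'' : ℝ → ℝ)
    (hr' : ∀ z : ℝ, HasDerivAt r (r' z) z)
    (hr'' : ∀ z : ℝ, HasDerivAt r' (r'' z) z)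
    (γ lam : ℝ) (hγ : 0 < γ) (hlam : 0 < lam)
    (hconv : ∀ z : ℝ, 2 * γ ≤ r'' z)
    (heig : ∀ β v : Fin p → ℝ,
      2 * lam * γ * (v ⬝ᵥ v) ≤ v ⬝ᵥ (Xᵀ * X).mulVec v + lam * ∑ k, r'' (β k) * v k ^ 2)
    (βhat βloo : Fin p → ℝ)
    (hβhat : ∀ β : Fin p → ℝ,
      (∑ j, (y j - X.mulVec βhat j) ^ 2 / 2) + lam * ∑ k, r (βhat k) ≤
        (∑ j, (y j - X.mulVec β j) ^ 2 / 2) + lam * ∑ k, r (β k))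
    (hβloo : ∀ β : Fin p → ℝ,
      (∑ j ∈ Finset.univ.erase i, (y j - X.mulVec βloo j) ^ 2 / 2) + lam * ∑ k, r (βloo k) ≤
        (∑ j ∈ Finset.univ.erase i, (y j - X.mulVec β j) ^ 2 / 2) + lam * ∑ k, r (β k)) :
    Real.sqrt (∑ k, (βloo k - βhat k) ^ 2) ≤
      |y i - X.mulVec βloo i| * Real.sqrt (∑ k, X i k ^ 2) / (2 * lam * γ) := by
    classical
  set d : Fin p → ℝ := fun k => βloo k - βhat k with hd
  set e : ℝ := X.mulVec βloo i - y i with he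
  have hA : ∀ k, ∑ j, (X.mulVec βhat j - y j) * X j k + lam * r' (βhat k) = 0 :=
    stationary X y r r' hr' lam univ βhat hβhat
  have hB : ∀ k, ∑ j ∈ univ.erase i, (X.mulVec βloo j - y j) * X j k
      + lam * r' (βloo k) = 0 :=
    stationary X y r r' hr' lam (univ.erase i) βloo hβloo
  -- per-coordinate stationarity difference
  have hE : ∀ k, (∑ j, (X.mulVec βloo j - X.mulVec βhat j) * X j k)
      + lam * (r' (βloo k) - r' (βhat k)) = e * X i k := by
    intro k
    have h1 := hA k
    have h2 := hB k
    have h3 : ∑ j ∈ univ.erase i, (X.mulVec βloo j - y j) * X j k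
        = (∑ j, (X.mulVec βloo j - y j) * X j k) - (X.mulVec βloo i - y i) * X i k :=
      Finset.sum_erase_eq_sub (Finset.mem_univ i)
    have h4 : ∑ j, (X.mulVec βloo j - X.mulVec βhat j) * X j k
        = (∑ j, (X.mulVec βloo j - y j) * X j k)
          - ∑ j, (X.mulVec βhat j - y j) * X j k := by
      rw [← Finset.sum_sub_distrib]
      exact Finset.sum_congr rfl fun j _ => by ring
    rw [h3] at h2
    rw [h4, he]
    linarith
  -- key identity, multiplied by d and summed
  have hmv : ∀ j, X.mulVec βloo j - X.mulVec βhat j = X.mulVec d j := by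
    intro j
    simp only [Matrix.mulVec, dotProduct, hd, ← Finset.sum_sub_distrib]
    exact Finset.sum_congr rfl fun k _ => by ring
  have key : (∑ j, (X.mulVec d j) ^ 2)
      + lam * ∑ k, (r' (βloo k) - r' (βhat k)) * d k
      = e * ∑ k, X i k * d k := by
    have h0 : ∑ k, ((∑ j, (X.mulVec βloo j - X.mulVec βhat j) * X j k)
        + lam * (r' (βloo k) - r' (βhat k))) * d k = ∑ k, (e * X i k) * d k := by
      exact Finset.sum_congr rfl fun k _ => by rw [hE k]
    have h1 : ∑ k, ((∑ j, (X.mulVec βloo j - X.mulVec βhat j) * X j k)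
        + lam * (r' (βloo k) - r' (βhat k))) * d k
        = (∑ k, ∑ j, (X.mulVec d j * X j k) * d k)
          + lam * ∑ k, (r' (βloo k) - r' (βhat k)) * d k := by
      rw [Finset.mul_sum, ← Finset.sum_add_distrib]
      refine Finset.sum_congr rfl fun k _ => ?_
      rw [add_mul, Finset.sum_mul]
      congr 1
      · exact Finset.sum_congr rfl fun j _ => by rw [hmv j]
      · ring
    have h2 : ∑ k, ∑ j, (X.mulVec d j * X j k) * d k = ∑ j, (X.mulVec d j) ^ 2 := by
      rw [Finset.sum_comm]
      refine Finset.sum_congr rfl fun j _ => ?_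
      have : ∑ k, X.mulVec d j * X j k * d k = X.mulVec d j * ∑ k, X j k * d k := by
        rw [Finset.mul_sum]; exact Finset.sum_congr rfl fun k _ => by ring
      rw [this]
      simp only [Matrix.mulVec, dotProduct]
      ring
    have h3 : ∑ k, (e * X i k) * d k = e * ∑ k, X i k * d k := by
      rw [Finset.mul_sum]; exact Finset.sum_congr rfl fun k _ => by ring
    rw [h1, h2, h3] at h0
    exact h0
  set S : ℝ := ∑ k, d k ^ 2 with hS
  have hSnn : 0 ≤ S := Finset.sum_nonneg fun k _ => sq_nonneg _
  have hconvlb : 2 * γ * S ≤ ∑ k, (r' (βloo k) - r' (βhat k)) * d k := by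
    rw [hS, Finset.mul_sum]
    refine Finset.sum_le_sum fun k _ => ?_
    have := strong_mono hr'' γ hconv (βloo k) (βhat k)
    simpa [hd] using this
  have hXd : 0 ≤ ∑ j, (X.mulVec d j) ^ 2 := Finset.sum_nonneg fun j _ => sq_nonneg _
  have h5 : 2 * lam * γ * S ≤ e * ∑ k, X i k * d k := by
    have := mul_le_mul_of_nonneg_left hconvlb (le_of_lt hlam)
    nlinarith
  have hCS : |∑ k, X i k * d k| ≤ Real.sqrt (∑ k, X i k ^ 2) * Real.sqrt S := by
    rw [← Real.sqrt_sq_eq_abs,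
        ← Real.sqrt_mul (Finset.sum_nonneg fun k _ => sq_nonneg _)]
    apply Real.sqrt_le_sqrt
    rw [hS]
    exact Finset.sum_mul_sq_le_sq_mul_sq _ _ _
  have h6 : 2 * lam * γ * S ≤ |e| * (Real.sqrt (∑ k, X i k ^ 2) * Real.sqrt S) := by
    calc 2 * lam * γ * S ≤ e * ∑ k, X i k * d k := h5
      _ ≤ |e * ∑ k, X i k * d k| := le_abs_self _
      _ = |e| * |∑ k, X i k * d k| := abs_mul _ _
      _ ≤ |e| * (Real.sqrt (∑ k, X i k ^ 2) * Real.sqrt S) :=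
          mul_le_mul_of_nonneg_left hCS (abs_nonneg _)
  have hgoal : Real.sqrt S ≤ |e| * Real.sqrt (∑ k, X i k ^ 2) / (2 * lam * γ) := by
    have hpos : 0 < 2 * lam * γ := by positivity
    rw [le_div_iff₀ hpos]
    have hsqS : Real.sqrt S ^ 2 = S := Real.sq_sqrt hSnn
    rcases eq_or_lt_of_le (Real.sqrt_nonneg S) with h0 | h0
    · rw [← h0, zero_mul]
      exact mul_nonneg (abs_nonneg e) (Real.sqrt_nonneg _)
    · nlinarith [h6]
  have habs : |y i - X.mulVec βloo i| = |e| := by rw [he, abs_sub_comm]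
  rw [habs]
  exact hgoal
end
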